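/- arXiv:1905.09762 — 2 statements merged into one kernel-verified Lean document; each statement's English description precedes it below -/
import Mathlib

section
/- (Spectral Minimax Theorem) Let n ≥ 1 and m ≥ 1, and let A₁, …, A_m be n × n real symmetric matrices. Then min over X in the spectraplex Δ_n of (max over y in the simplex S_m of ∑_{i=1}^m y_i (A_i • X)) equals max over y in S_m of (min over X in Δ_n of ∑_{i=1}^m y_i (A_i • X)); both the outer minimum/maximum and inner maximum/minimum are attained. -/
open Matrix BigOperators

/-- The spectraplex: symmetric positive semidefinite `n × n` real matrices of trace one. -/
def spectraplex (n : ℕ) : Set (Matrix (Fin n) (Fin n) ℝ) :=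
  {X | X.IsSymm ∧ X.PosSemidef ∧ X.trace = 1}

/-- The unit simplex in `ℝ^m`. -/
def unitSimplex (m : ℕ) : Set (Fin m → ℝ) :=
  {y | (∑ i, y i) = 1 ∧ ∀ i, 0 ≤ y i}

namespace SpectralMinimaxAux

lemma spectraplex_nonempty {n : ℕ} (hn : 1 ≤ n) : (spectraplex n).Nonempty := by
  have hn0 : (n : ℝ) ≠ 0 := by positivity
  refine ⟨Matrix.diagonal (fun _ => (n : ℝ)⁻¹), Matrix.isSymm_diagonal _,
    Matrix.PosSemidef.diagonal (fun i => by positivity), ?_⟩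
  rw [Matrix.trace_diagonal]
  simp [Finset.sum_const, Finset.card_univ, nsmul_eq_mul]
  field_simp

lemma spectraplex_convex {n : ℕ} : Convex ℝ (spectraplex n) := by
  rintro X ⟨hXs, hXp, hXt⟩ Y ⟨hYs, hYp, hYt⟩ a b ha hb hab
  have hXs' : Xᵀ = X := hXs
  have hYs' : Yᵀ = Y := hYs
  have hsymm : (a • X + b • Y).IsSymm := by
    show (a • X + b • Y)ᵀ = a • X + b • Y
    rw [Matrix.transpose_add, Matrix.transpose_smul, Matrix.transpose_smul, hXs', hYs']
  refine ⟨hsymm, Matrix.PosSemidef.of_dotProduct_mulVec_nonneg hsymm ?_, ?_⟩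
  · intro x
    have h1 := hXp.dotProduct_mulVec_nonneg x
    have h2 := hYp.dotProduct_mulVec_nonneg x
    have hexp : star x ⬝ᵥ (a • X + b • Y) *ᵥ x
        = a * (star x ⬝ᵥ X *ᵥ x) + b * (star x ⬝ᵥ Y *ᵥ x) := by
      rw [Matrix.add_mulVec, Matrix.smul_mulVec, Matrix.smul_mulVec,
        dotProduct_add, dotProduct_smul, dotProduct_smul,
        smul_eq_mul, smul_eq_mul]
    rw [hexp]
    exact add_nonneg (mul_nonneg ha h1) (mul_nonneg hb h2)
  · rw [Matrix.trace_add, Matrix.trace_smul, Matrix.trace_smul, hXt, hYt,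
      smul_eq_mul, smul_eq_mul, mul_one, mul_one, hab]

lemma spectraplex_entry_mem {n : ℕ} {X : Matrix (Fin n) (Fin n) ℝ}
    (hX : X ∈ spectraplex n) (i j : Fin n) : X i j ∈ Set.Icc (-1 : ℝ) 1 := by
  obtain ⟨hs, hpsd, htr⟩ := hX
  obtain ⟨B, hB⟩ : ∃ B : Matrix (Fin n) (Fin n) ℝ, X = Bᴴ * B := by
    open MatrixOrder in
    exact CStarAlgebra.nonneg_iff_eq_star_mul_self.mp hpsd.nonneg
  have hentry : ∀ k l, X k l = ∑ r, B r k * B r l := by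
    intro k l
    rw [hB]
    simp [Matrix.mul_apply, Matrix.conjTranspose_apply]
  have hdiag : ∀ k, 0 ≤ X k k := by
    intro k
    rw [hentry]
    exact Finset.sum_nonneg fun r _ => mul_self_nonneg _
  have htr' : ∑ k, X k k = 1 := htr
  have hdle : ∀ k, X k k ≤ 1 := by
    intro k
    have := Finset.single_le_sum (f := fun k => X k k) (fun r _ => hdiag r)
      (Finset.mem_univ k)
    rw [htr'] at this
    exact this
  have hcs : (∑ r, B r i * B r j) ^ 2 ≤ (∑ r, B r i ^ 2) * (∑ r, B r j ^ 2) :=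
    Finset.sum_mul_sq_le_sq_mul_sq _ _ _
  have hii : (∑ r, B r i ^ 2) = X i i := by rw [hentry]; exact Finset.sum_congr rfl (by intros; ring)
  have hjj : (∑ r, B r j ^ 2) = X j j := by rw [hentry]; exact Finset.sum_congr rfl (by intros; ring)
  have hsq : X i j ^ 2 ≤ 1 := by
    have h1 : X i j ^ 2 ≤ X i i * X j j := by
      rw [hentry i j]
      calc (∑ r, B r i * B r j) ^ 2 ≤ (∑ r, B r i ^ 2) * (∑ r, B r j ^ 2) := hcs
        _ = X i i * X j j := by rw [hii, hjj]
    nlinarith [hdiag i, hdiag j, hdle i, hdle j]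
  constructor <;> nlinarith [hsq]

lemma spectraplex_isClosed {n : ℕ} : IsClosed (spectraplex n) := by
  have h1 : IsClosed {X : Matrix (Fin n) (Fin n) ℝ | X.IsSymm} :=
    isClosed_eq (continuous_id.matrix_transpose) continuous_id
  have h2 : IsClosed {X : Matrix (Fin n) (Fin n) ℝ | ∀ x, 0 ≤ star x ⬝ᵥ X *ᵥ x} := by
    have : {X : Matrix (Fin n) (Fin n) ℝ | ∀ x, 0 ≤ star x ⬝ᵥ X *ᵥ x}
        = ⋂ x : Fin n → ℝ, {X | 0 ≤ star x ⬝ᵥ X *ᵥ x} := by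
      ext X; simp [Set.mem_iInter]
    rw [this]
    refine isClosed_iInter fun x => isClosed_le continuous_const ?_
    exact Continuous.dotProduct continuous_const
      (continuous_id.matrix_mulVec continuous_const)
  have h3 : IsClosed {X : Matrix (Fin n) (Fin n) ℝ | X.trace = 1} :=
    isClosed_eq (continuous_id.matrix_trace) continuous_const
  have heq : spectraplex n = {X : Matrix (Fin n) (Fin n) ℝ | X.IsSymm}
      ∩ ({X | ∀ x, 0 ≤ star x ⬝ᵥ X *ᵥ x} ∩ {X | X.trace = 1}) := by
    ext X
    constructor
    · rintro ⟨hs, hp, ht⟩; exact ⟨hs, hp.dotProduct_mulVec_nonneg, ht⟩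
    · rintro ⟨hs, hp, ht⟩
      exact ⟨hs, Matrix.PosSemidef.of_dotProduct_mulVec_nonneg (show X.IsSymm from hs : X.IsHermitian) hp, ht⟩
  rw [heq]
  exact h1.inter (h2.inter h3)

lemma spectraplex_isCompact {n : ℕ} : IsCompact (spectraplex n) := by
  have hK : IsCompact (Set.univ.pi fun _ : Fin n =>
      Set.univ.pi fun _ : Fin n => Set.Icc (-1 : ℝ) 1) :=
    isCompact_univ_pi fun _ => isCompact_univ_pi fun _ => isCompact_Icc
  refine hK.of_isClosed_subset spectraplex_isClosed ?_
  intro X hX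
  simp only [Set.mem_pi, Set.mem_univ, forall_true_left]
  intro i j
  exact spectraplex_entry_mem hX i j

/-- Maximizing a linear functional over the simplex. -/
lemma simplex_isGreatest {m : ℕ} (hm : 1 ≤ m) (c : Fin m → ℝ) :
    IsGreatest {s : ℝ | ∃ y ∈ unitSimplex m, s = ∑ i, y i * c i}
      (Finset.univ.sup' ⟨⟨0, hm⟩, Finset.mem_univ _⟩ c) := by
  classical
  set M := Finset.univ.sup' ⟨⟨0, hm⟩, Finset.mem_univ _⟩ c with hM
  constructor
  · obtain ⟨i₀, _, hi₀⟩ := Finset.exists_mem_eq_sup' (⟨⟨0, hm⟩, Finset.mem_univ _⟩ :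
      (Finset.univ : Finset (Fin m)).Nonempty) c
    refine ⟨(Pi.single i₀ (1:ℝ) : Fin m → ℝ), ⟨?_, ?_⟩, ?_⟩
    · rw [Finset.sum_pi_single']; simp
    · intro i
      rw [Pi.single_apply]
      split <;> norm_num
    · rw [hM, hi₀]
      symm
      calc ∑ i, (Pi.single i₀ (1:ℝ) : Fin m → ℝ) i * c i
          = ∑ i, (if i = i₀ then (1:ℝ) else 0) * c i := by
            refine Finset.sum_congr rfl fun i _ => ?_
            congr 1
            exact Pi.single_apply i₀ (1:ℝ) i
        _ = ∑ i, if i = i₀ then c i else 0 := by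
            refine Finset.sum_congr rfl fun i _ => ?_
            split <;> simp
        _ = c i₀ := by rw [Finset.sum_ite_eq' Finset.univ i₀ c]; simp
  · rintro s ⟨y, ⟨hysum, hynn⟩, rfl⟩
    calc ∑ i, y i * c i ≤ ∑ i, y i * M := by
          refine Finset.sum_le_sum fun i _ => ?_
          exact mul_le_mul_of_nonneg_left (Finset.le_sup' c (Finset.mem_univ i)) (hynn i)
      _ = M := by rw [← Finset.sum_mul, hysum, one_mul]

end SpectralMinimaxAux

open SpectralMinimaxAux in
/-- **Spectral Minimax Theorem.** Given real symmetric matrices `A 1, …, A m`,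
`min_{X ∈ Δₙ} max_{y ∈ Sₘ} ∑ yᵢ (Aᵢ • X) = max_{y ∈ Sₘ} min_{X ∈ Δₙ} ∑ yᵢ (Aᵢ • X)`,
with all inner and outer extrema attained. -/
theorem spectral_minimax {n m : ℕ} (hn : 1 ≤ n) (hm : 1 ≤ m)
    (A : Fin m → Matrix (Fin n) (Fin n) ℝ) (hA : ∀ i, (A i).IsSymm) :
    (∀ X ∈ spectraplex n, ∃ g : ℝ,
      IsGreatest {s : ℝ | ∃ y ∈ unitSimplex m, s = ∑ i, y i * (A i * X).trace} g) ∧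
    (∀ y ∈ unitSimplex m, ∃ l : ℝ,
      IsLeast {s : ℝ | ∃ X ∈ spectraplex n, s = ∑ i, y i * (A i * X).trace} l) ∧
    ∃ v : ℝ,
      IsLeast {r : ℝ | ∃ X ∈ spectraplex n,
        IsGreatest {s : ℝ | ∃ y ∈ unitSimplex m, s = ∑ i, y i * (A i * X).trace} r} v ∧
      IsGreatest {r : ℝ | ∃ y ∈ unitSimplex m,
        IsLeast {s : ℝ | ∃ X ∈ spectraplex n, s = ∑ i, y i * (A i * X).trace} r} v := by
  classical
  have hne : (spectraplex n).Nonempty := spectraplex_nonempty hn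
  have hcpt : IsCompact (spectraplex n) := spectraplex_isCompact
  have hconv : Convex ℝ (spectraplex n) := spectraplex_convex
  have hune : (Finset.univ : Finset (Fin m)).Nonempty := ⟨⟨0, hm⟩, Finset.mem_univ _⟩
  -- the payoff functions
  set c : Fin m → Matrix (Fin n) (Fin n) ℝ → ℝ := fun i X => (A i * X).trace with hcdef
  have hccont : ∀ i, Continuous (c i) := fun i =>
    (continuous_const.matrix_mul continuous_id).matrix_trace
  -- the upper envelope
  set f : Matrix (Fin n) (Fin n) ℝ → ℝ := fun X => Finset.univ.sup' hune (fun i => c i X)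
    with hfdef
  have hfcont : Continuous f := by
    have h := Continuous.finset_sup' (s := (Finset.univ : Finset (Fin m)))
      (f := fun i (X : Matrix (Fin n) (Fin n) ℝ) => c i X) hune (fun i _ => hccont i)
    have heq : (Finset.univ.sup' hune fun i (X : Matrix (Fin n) (Fin n) ℝ) => c i X) = f := by
      funext X
      rw [hfdef]
      exact Finset.sup'_apply hune _ X
    rwa [heq] at h
  -- Part 2 helper: minimum over spectraplex for a fixed y, attained by compactness
  have part2 : ∀ y : Fin m → ℝ, ∃ l : ℝ, ∃ X₀ ∈ spectraplex n,
      l = ∑ i, y i * c i X₀ ∧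
      IsLeast {s : ℝ | ∃ X ∈ spectraplex n, s = ∑ i, y i * c i X} l := by
    intro y
    have hFcont : Continuous (fun X => ∑ i, y i * c i X) :=
      continuous_finset_sum _ fun i _ => (continuous_const.mul (hccont i))
    obtain ⟨X₀, hX₀, hmin⟩ := hcpt.exists_isMinOn hne hFcont.continuousOn
    exact ⟨_, X₀, hX₀, rfl, ⟨⟨X₀, hX₀, rfl⟩, by rintro s ⟨X, hX, rfl⟩; exact hmin hX⟩⟩
  -- the outer minimizer
  obtain ⟨Xs, hXs, hXsmin⟩ := hcpt.exists_isMinOn hne hfcont.continuousOn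
  set v := f Xs with hvdef
  refine ⟨fun X _ => ⟨_, simplex_isGreatest hm (fun i => c i X)⟩,
    fun y _ => by obtain ⟨l, _, _, _, hl⟩ := part2 y; exact ⟨l, hl⟩, v, ?_, ?_⟩
  · -- IsLeast for the min-max set
    constructor
    · exact ⟨Xs, hXs, simplex_isGreatest hm (fun i => c i Xs)⟩
    · rintro r ⟨X, hX, hgr⟩
      have : r = f X := hgr.unique (simplex_isGreatest hm (fun i => c i X))
      rw [this]
      exact hXsmin hX
  · -- IsGreatest for the max-min set
    constructor
    · -- separation argument produces an optimal y*
      set L : Matrix (Fin n) (Fin n) ℝ →ₗ[ℝ] (Fin m → ℝ) :=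
        { toFun := fun X i => c i X
          map_add' := by
            intro X Y; funext i; simp [hcdef, Matrix.mul_add, Matrix.trace_add]
          map_smul' := by
            intro a X; funext i; simp [hcdef, Matrix.mul_smul, Matrix.trace_smul] }
        with hLdef
      have hLapp : ∀ X i, L X i = c i X := fun X i => rfl
      set T : Set (Fin m → ℝ) := L '' spectraplex n with hTdef
      have hTconv : Convex ℝ T := hconv.linear_image L
      set box : Set (Fin m → ℝ) := {d | ∀ i, d i < v} with hboxdef
      have hboxeq : box = Set.univ.pi fun _ : Fin m => Set.Iio v := by
        ext d; simp [hboxdef, Set.mem_pi]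
      have hboxconv : Convex ℝ box := by
        rw [hboxeq]; exact convex_pi fun i _ => convex_Iio v
      have hboxopen : IsOpen box := by
        rw [hboxeq]; exact isOpen_set_pi Set.finite_univ fun i _ => isOpen_Iio
      have hdisj : Disjoint box T := by
        rw [Set.disjoint_left]
        rintro d hd ⟨X, hX, rfl⟩
        obtain ⟨i₀, _, hi₀⟩ := Finset.exists_mem_eq_sup' hune (fun i => c i X)
        have h1 : v ≤ c i₀ X := by
          have h := hXsmin hX
          calc v ≤ f X := h
            _ = c i₀ X := hi₀
        have h2 : ¬ L X i₀ < v := not_lt.mpr (by rw [hLapp]; exact h1)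
        exact h2 (hd i₀)
      obtain ⟨φ, u, hbox, hT⟩ := geometric_hahn_banach_open hboxconv hboxopen hTconv hdisj
      set w : Fin m → ℝ := fun i => φ (Pi.single i 1) with hwdef
      have hφ : ∀ d : Fin m → ℝ, φ d = ∑ i, d i * w i := by
        intro d
        have h := LinearMap.pi_apply_eq_sum_univ
          (φ.toLinearMap.comp (LinearMap.id : (Fin m → ℝ) →ₗ[ℝ] (Fin m → ℝ))) d
        simp only [LinearMap.comp_apply, LinearMap.id_apply, ContinuousLinearMap.coe_coe,
          smul_eq_mul] at h
        rw [h]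
        refine Finset.sum_congr rfl fun i _ => ?_
        congr 1
        rw [hwdef]
        congr 1
        funext j
        simp [Pi.single_apply, eq_comm]
      -- the constant function v - 1 lies in the box
      have hKbox : (fun _ : Fin m => v - 1) ∈ box := fun i => by norm_num
      have hwnn : ∀ i, 0 ≤ w i := by
        intro i
        by_contra h
        push_neg at h
        set t : ℝ := (u - φ (fun _ => v - 1) + 1) / w i with htdef
        have hnum : 0 < u - φ (fun _ => v - 1) + 1 := by
          have := hbox _ hKbox; linarith
        have ht : t < 0 := div_neg_of_pos_of_neg hnum h
        have hdbox : ((fun _ : Fin m => v - 1) + t • (Pi.single i (1:ℝ) : Fin m → ℝ)) ∈ box := by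
          intro j
          simp only [Pi.add_apply, Pi.smul_apply, smul_eq_mul, Pi.single_apply]
          split <;> nlinarith
        have hval : φ ((fun _ : Fin m => v - 1) + t • (Pi.single i (1:ℝ) : Fin m → ℝ))
            = φ (fun _ => v - 1) + t * w i := by
          rw [map_add, _root_.map_smul, smul_eq_mul]
        have htw : t * w i = u - φ (fun _ => v - 1) + 1 := by
          rw [htdef, div_mul_cancel₀ _ (ne_of_lt h)]
        have := hbox _ hdbox
        rw [hval, htw] at this
        linarith
      set s₀ : ℝ := ∑ i, w i with hs₀def
      have hs₀pos : 0 < s₀ := by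
        rcases lt_or_ge 0 s₀ with h | h
        · exact h
        · exfalso
          have hz : ∀ i ∈ Finset.univ, w i = 0 := by
            have hsum0 : ∑ i, w i = 0 :=
              le_antisymm h (Finset.sum_nonneg fun i _ => hwnn i)
            exact fun i hi =>
              (Finset.sum_eq_zero_iff_of_nonneg fun i _ => hwnn i).mp hsum0 i hi
          have hφ0 : ∀ d, φ d = 0 := by
            intro d; rw [hφ]
            exact Finset.sum_eq_zero fun i hi => by rw [hz i hi, mul_zero]
          have h1 := hbox _ hKbox
          obtain ⟨X₁, hX₁⟩ := hne
          have h2 := hT (L X₁) ⟨X₁, hX₁, rfl⟩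
          rw [hφ0] at h1 h2
          linarith
      have huv : v * s₀ ≤ u := by
        by_contra h
        push_neg at h
        set ε : ℝ := (v * s₀ - u) / s₀ with hεdef
        have hε : 0 < ε := div_pos (by linarith) hs₀pos
        have hK'box : (fun _ : Fin m => v - ε) ∈ box := fun i => by
          simp only; linarith
        have := hbox _ hK'box
        rw [hφ] at this
        have hsum : ∑ i, (v - ε) * w i = (v - ε) * s₀ := by
          rw [hs₀def, Finset.mul_sum]
        rw [hsum] at this
        have hεs : ε * s₀ = v * s₀ - u := by
          rw [hεdef, div_mul_cancel₀ _ (ne_of_gt hs₀pos)]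
        nlinarith
      -- the optimal y
      set ys : Fin m → ℝ := fun i => w i / s₀ with hysdef
      have hysS : ys ∈ unitSimplex m := by
        constructor
        · rw [hysdef]; simp only
          rw [← Finset.sum_div, ← hs₀def, div_self (ne_of_gt hs₀pos)]
        · intro i; exact div_nonneg (hwnn i) (le_of_lt hs₀pos)
      have hkey : ∀ X ∈ spectraplex n, v ≤ ∑ i, ys i * c i X := by
        intro X hX
        have h1 : u ≤ φ (L X) := hT (L X) ⟨X, hX, rfl⟩
        rw [hφ] at h1
        have h2 : ∑ i, L X i * w i = ∑ i, w i * c i X := by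
          refine Finset.sum_congr rfl fun i _ => ?_
          rw [hLapp]; ring
        rw [h2] at h1
        have h3 : ∑ i, ys i * c i X = (∑ i, w i * c i X) / s₀ := by
          rw [Finset.sum_div]
          refine Finset.sum_congr rfl fun i _ => ?_
          rw [hysdef]; ring
        rw [h3, le_div_iff₀ hs₀pos]
        calc v * s₀ ≤ u := huv
          _ ≤ ∑ i, w i * c i X := h1
      -- the value at Xs equals v
      have hub : ∑ i, ys i * c i Xs ≤ v :=
        (simplex_isGreatest hm (fun i => c i Xs)).2 ⟨ys, hysS, rfl⟩
      have heq : ∑ i, ys i * c i Xs = v := le_antisymm hub (hkey Xs hXs)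
      exact ⟨ys, hysS, ⟨⟨Xs, hXs, heq.symm⟩, by
        rintro s ⟨X, hX, rfl⟩; exact hkey X hX⟩⟩
    · -- upper bound for the max-min set
      rintro r ⟨y, hyS, hleast⟩
      have h1 : r ≤ ∑ i, y i * c i Xs := hleast.2 ⟨Xs, hXs, rfl⟩
      have h2 : ∑ i, y i * c i Xs ≤ v :=
        (simplex_isGreatest hm (fun i => c i Xs)).2 ⟨y, hyS, rfl⟩
      linarith
end

section
/- (Spectral Maximin Theorem) Let n ≥ 1 and m ≥ 1, and let A₁, …, A_m be n × n real symmetric matrices. Then max over X in the spectraplex Δ_n of (min over y in the simplex S_m of ∑_{i=1}^m y_i (A_i • X)) equals min over y in S_m of (max over X in Δ_n of ∑_{i=1}^m y_i (A_i • X)); both the outer maximum/minimum and inner minimum/maximum are attained. -/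
open Matrix BigOperators

section Simplex
variable {m : ℕ}

lemma univ_nonempty_fin (hm : 1 ≤ m) : (Finset.univ : Finset (Fin m)).Nonempty :=
  ⟨⟨0, hm⟩, Finset.mem_univ _⟩

lemma single_mem_unitSimplex (i₀ : Fin m) : (Pi.single i₀ 1 : Fin m → ℝ) ∈ unitSimplex m := by
  constructor
  · simp [Finset.sum_pi_single]
  · intro i
    rcases eq_or_ne i i₀ with rfl | h
    · simp
    · simp [Pi.single_eq_of_ne h]

lemma inf_le_simplex_sum (hm : 1 ≤ m) (c : Fin m → ℝ) {y : Fin m → ℝ} (hy : y ∈ unitSimplex m) :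
    Finset.univ.inf' (univ_nonempty_fin hm) c ≤ ∑ i, y i * c i := by
  calc Finset.univ.inf' (univ_nonempty_fin hm) c
      = ∑ i, y i * Finset.univ.inf' (univ_nonempty_fin hm) c := by
        rw [← Finset.sum_mul, hy.1, one_mul]
    _ ≤ ∑ i, y i * c i := by
        apply Finset.sum_le_sum
        intro i _
        exact mul_le_mul_of_nonneg_left (Finset.inf'_le _ (Finset.mem_univ i)) (hy.2 i)

lemma simplex_isLeast (hm : 1 ≤ m) (c : Fin m → ℝ) :
    IsLeast {s : ℝ | ∃ y ∈ unitSimplex m, s = ∑ i, y i * c i}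
      (Finset.univ.inf' (univ_nonempty_fin hm) c) := by
  constructor
  · obtain ⟨i₀, -, h⟩ := Finset.exists_mem_eq_inf' (univ_nonempty_fin hm) c
    refine ⟨Pi.single i₀ 1, single_mem_unitSimplex i₀, ?_⟩
    rw [h]
    rw [Finset.sum_eq_single i₀]
    · simp
    · intro b _ hb; simp [Pi.single_eq_of_ne hb]
    · simp
  · rintro s ⟨y, hy, rfl⟩
    exact inf_le_simplex_sum hm c hy

end Simplex

section SpecMax
variable {n : ℕ}

lemma isSymm_isHermitian {B : Matrix (Fin n) (Fin n) ℝ} (hB : B.IsSymm) : B.IsHermitian := by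
  rwa [Matrix.IsHermitian, conjTranspose_eq_transpose_of_trivial]

lemma simplex_sum_le_sup (hm : 1 ≤ n) (c : Fin n → ℝ) {y : Fin n → ℝ} (hy : y ∈ unitSimplex n) :
    ∑ i, y i * c i ≤ Finset.univ.sup' (univ_nonempty_fin hm) c := by
  calc ∑ i, y i * c i
      ≤ ∑ i, y i * Finset.univ.sup' (univ_nonempty_fin hm) c := by
        apply Finset.sum_le_sum
        intro i _
        exact mul_le_mul_of_nonneg_left (Finset.le_sup' _ (Finset.mem_univ i)) (hy.2 i)
    _ = Finset.univ.sup' (univ_nonempty_fin hm) c := by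
        rw [← Finset.sum_mul, hy.1, one_mul]

lemma diag_mem_unitSimplex {X : Matrix (Fin n) (Fin n) ℝ} (hX : X.PosSemidef)
    (ht : X.trace = 1) : (fun i => X i i) ∈ unitSimplex n := by
  constructor
  · simpa [Matrix.trace, Matrix.diag] using ht
  · intro i
    have := hX.dotProduct_mulVec_nonneg (Pi.single i 1)
    simpa [Matrix.mulVec_single, dotProduct, Pi.single_apply] using this

lemma mulVec_vecMulVec (v x : Fin n → ℝ) :
    (vecMulVec v v) *ᵥ x = (v ⬝ᵥ x) • v := by
  funext i
  simp only [Matrix.mulVec, vecMulVec_apply, dotProduct, Pi.smul_apply, smul_eq_mul,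
    Finset.sum_mul]
  exact Finset.sum_congr rfl fun j _ => by ring

lemma vecMulVec_mem_spectraplex {v : Fin n → ℝ} (hv : ∑ i, v i * v i = 1) :
    vecMulVec v v ∈ spectraplex n := by
  have hsymm : (vecMulVec v v).IsSymm := by
    ext i j; simp [Matrix.transpose_apply, vecMulVec_apply, mul_comm]
  refine ⟨hsymm, Matrix.PosSemidef.of_dotProduct_mulVec_nonneg (isSymm_isHermitian hsymm) fun x => ?_, ?_⟩
  · rw [mulVec_vecMulVec]
    have : star x ⬝ᵥ (v ⬝ᵥ x) • v = (v ⬝ᵥ x) * (x ⬝ᵥ v) := by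
      simp [dotProduct_smul, dotProduct_comm, star_trivial]
    rw [this, dotProduct_comm]
    exact mul_self_nonneg _
  · simpa [Matrix.trace, Matrix.diag, vecMulVec_apply] using hv

lemma spectraplex_isGreatest (hn : 1 ≤ n) {B : Matrix (Fin n) (Fin n) ℝ} (hB : B.IsSymm) :
    IsGreatest {s : ℝ | ∃ X ∈ spectraplex n, s = (B * X).trace}
      (Finset.univ.sup' (univ_nonempty_fin hn) (isSymm_isHermitian hB).eigenvalues) := by
  have hB' := isSymm_isHermitian hB
  constructor
  · obtain ⟨j₀, -, hj₀⟩ := Finset.exists_mem_eq_sup' (univ_nonempty_fin hn) hB'.eigenvalues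
    set v : Fin n → ℝ := ⇑(hB'.eigenvectorBasis j₀) with hv
    have hnorm : ∑ i, v i * v i = 1 := by
      have h1 : ‖hB'.eigenvectorBasis j₀‖ = 1 := hB'.eigenvectorBasis.orthonormal.1 j₀
      rw [EuclideanSpace.norm_eq] at h1
      have h2 : ∑ i, v i ^ 2 = 1 := by
        rw [← Real.sqrt_eq_one]
        convert h1 using 2
        apply Finset.sum_congr rfl
        intro i _
        rw [Real.norm_eq_abs, sq_abs]
      calc ∑ i, v i * v i = ∑ i, v i ^ 2 := Finset.sum_congr rfl fun i _ => (sq (v i)).symm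
        _ = 1 := h2
    rw [hj₀]
    refine ⟨vecMulVec v v, vecMulVec_mem_spectraplex hnorm, ?_⟩
    have key : (B * vecMulVec v v).trace = ∑ i, (B *ᵥ v) i * v i := by
      rw [Matrix.trace]
      apply Finset.sum_congr rfl
      intro i _
      simp only [Matrix.diag_apply, Matrix.mul_apply, vecMulVec_apply, Matrix.mulVec,
        dotProduct, Finset.sum_mul]
      exact Finset.sum_congr rfl fun j _ => by ring
    have hstep : ∑ i, (hB'.eigenvalues j₀ • v) i * v i
        = hB'.eigenvalues j₀ * ∑ i, v i * v i := by
      rw [Finset.mul_sum]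
      exact Finset.sum_congr rfl fun i _ => by
        simp only [Pi.smul_apply, smul_eq_mul]; ring
    rw [key, hB'.mulVec_eigenvectorBasis j₀, hstep, hnorm, mul_one]
  · rintro s ⟨X, ⟨hXs, hXp, hXt⟩, rfl⟩
    set U : Matrix (Fin n) (Fin n) ℝ := (hB'.eigenvectorUnitary : Matrix (Fin n) (Fin n) ℝ) with hU
    have hUmem := hB'.eigenvectorUnitary.2
    have hspec := hB'.spectral_theorem
    set M : Matrix (Fin n) (Fin n) ℝ := (star U) * X * U with hM
    have hMp : M.PosSemidef := hXp.conjTranspose_mul_mul_same U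
    have hMt : M.trace = 1 := by
      rw [hM, Matrix.trace_mul_cycle, hU, Matrix.mem_unitaryGroup_iff.mp hUmem,
        Matrix.one_mul, hXt]
    have hD : (B * X).trace = ∑ i, hB'.eigenvalues i * M i i := by
      have e1 : (B * X).trace
          = (Matrix.diagonal (RCLike.ofReal ∘ hB'.eigenvalues) * M).trace := by
        rw [hM, hU]
        conv_lhs => rw [hspec, Unitary.conjStarAlgAut_apply]
        rw [Matrix.trace_mul_cycle, Matrix.trace_mul_cycle, ← Matrix.mul_assoc,
          Matrix.trace_mul_comm]
      rw [e1]
      simp [Matrix.trace, Matrix.diag, Matrix.diagonal_mul]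
    rw [hD]
    have hd := diag_mem_unitSimplex hMp hMt
    calc ∑ i, hB'.eigenvalues i * M i i = ∑ i, M i i * hB'.eigenvalues i := by
          exact Finset.sum_congr rfl fun i _ => mul_comm _ _
      _ ≤ _ := simplex_sum_le_sup hn hB'.eigenvalues hd

end SpecMax

section Topo
variable {n : ℕ}

lemma continuous_traceMul (C : Matrix (Fin n) (Fin n) ℝ) :
    Continuous fun X : Matrix (Fin n) (Fin n) ℝ => (C * X).trace :=
  (continuous_const.matrix_mul continuous_id).matrix_trace

lemma spectraplex_eq_inter : spectraplex n =
    ({X : Matrix (Fin n) (Fin n) ℝ | X.IsSymm} ∩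
     {X : Matrix (Fin n) (Fin n) ℝ | ∀ v : Fin n → ℝ, 0 ≤ v ⬝ᵥ (X *ᵥ v)}) ∩
    {X : Matrix (Fin n) (Fin n) ℝ | X.trace = 1} := by
  ext X
  constructor
  · rintro ⟨hs, hp, ht⟩
    exact ⟨⟨hs, fun v => by simpa [star_trivial] using hp.dotProduct_mulVec_nonneg v⟩, ht⟩
  · rintro ⟨⟨hs, hp⟩, ht⟩
    exact ⟨hs, Matrix.PosSemidef.of_dotProduct_mulVec_nonneg (isSymm_isHermitian hs) fun v => by simpa [star_trivial] using hp v, ht⟩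

lemma spectraplex_isClosed : IsClosed (spectraplex n) := by
  rw [spectraplex_eq_inter]
  refine IsClosed.inter (IsClosed.inter ?_ ?_) ?_
  · have h : {X : Matrix (Fin n) (Fin n) ℝ | X.IsSymm} =
        ⋂ (i : Fin n) (j : Fin n), {X : Matrix (Fin n) (Fin n) ℝ | X j i = X i j} := by
      ext X
      simp only [Set.mem_setOf_eq, Set.mem_iInter, Matrix.IsSymm.ext_iff]
    rw [h]
    exact isClosed_iInter fun i => isClosed_iInter fun j =>
      isClosed_eq (continuous_id.matrix_elem j i) (continuous_id.matrix_elem i j)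
  · have h : {X : Matrix (Fin n) (Fin n) ℝ | ∀ v : Fin n → ℝ, 0 ≤ v ⬝ᵥ (X *ᵥ v)} =
        ⋂ (v : Fin n → ℝ), {X : Matrix (Fin n) (Fin n) ℝ | 0 ≤ v ⬝ᵥ (X *ᵥ v)} := by
      ext X; simp
    rw [h]
    refine isClosed_iInter fun v => isClosed_le continuous_const ?_
    exact Continuous.dotProduct continuous_const
      (continuous_id.matrix_mulVec continuous_const)
  · exact isClosed_eq continuous_id.matrix_trace continuous_const

lemma spectraplex_entry_abs_le {X : Matrix (Fin n) (Fin n) ℝ} (hX : X ∈ spectraplex n)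
    (i j : Fin n) : |X i j| ≤ 1 := by
  obtain ⟨hs, hp, ht⟩ := hX
  have hdiag : ∀ k, 0 ≤ X k k := fun k => by
    simpa [Matrix.mulVec_single, single_dotProduct, star_trivial] using
      hp.dotProduct_mulVec_nonneg (Pi.single k 1)
  have htr : ∑ k, X k k = 1 := by simpa [Matrix.trace, Matrix.diag] using ht
  have hdle : ∀ k, X k k ≤ 1 := fun k => by
    have := Finset.single_le_sum (f := fun k => X k k) (fun k _ => hdiag k) (Finset.mem_univ k)
    rw [htr] at this; exact this
  rcases eq_or_ne i j with rfl | hij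
  · rw [abs_of_nonneg (hdiag i)]; exact hdle i
  · have hsum : X i i + X j j ≤ 1 := by
      have h2 : ∑ k ∈ ({i, j} : Finset (Fin n)), X k k ≤ ∑ k, X k k :=
        Finset.sum_le_sum_of_subset_of_nonneg (Finset.subset_univ _) fun k _ _ => hdiag k
      rw [Finset.sum_pair hij, htr] at h2
      exact h2
    have hji : X j i = X i j := hs.apply i j
    have hq1 := hp.dotProduct_mulVec_nonneg (Pi.single i 1 + Pi.single j 1)
    have hq2 := hp.dotProduct_mulVec_nonneg (Pi.single i 1 - Pi.single j 1)
    simp only [star_trivial, Matrix.mulVec_add, Matrix.mulVec_sub, add_dotProduct,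
      sub_dotProduct, dotProduct_add, dotProduct_sub,
      Matrix.mulVec_single, single_dotProduct, Pi.smul_apply, Matrix.col_apply,
      op_smul_eq_mul, mul_one, one_mul] at hq1 hq2
    rw [abs_le]
    constructor <;> nlinarith [hq1, hq2, hsum, hji]

lemma spectraplex_isCompact : IsCompact (spectraplex n) := by
  have hbox : IsCompact ((Set.pi Set.univ fun _ : Fin n =>
      (Set.pi Set.univ fun _ : Fin n => Set.Icc (-1 : ℝ) 1)) :
        Set (Matrix (Fin n) (Fin n) ℝ)) :=
    isCompact_univ_pi fun _ => isCompact_univ_pi fun _ => isCompact_Icc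
  refine hbox.of_isClosed_subset spectraplex_isClosed ?_
  intro X hX
  intro i _
  intro j _
  exact abs_le.mp (spectraplex_entry_abs_le hX i j)

lemma spectraplex_nonempty (hn : 1 ≤ n) : (spectraplex n).Nonempty := by
  refine ⟨Matrix.diagonal (Pi.single ⟨0, hn⟩ 1), Matrix.isSymm_diagonal _, ?_, ?_⟩
  · refine Matrix.PosSemidef.diagonal ?_
    intro k
    rcases eq_or_ne k ⟨0, hn⟩ with rfl | h
    · simp
    · simp [Pi.single_eq_of_ne h]
  · simp [Matrix.trace_diagonal, Finset.sum_pi_single]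

lemma posSemidef_smul {X : Matrix (Fin n) (Fin n) ℝ} (hX : X.PosSemidef) {a : ℝ} (ha : 0 ≤ a) :
    (a • X).PosSemidef := by
  refine Matrix.PosSemidef.of_dotProduct_mulVec_nonneg ?_ ?_
  · have := hX.1
    rw [Matrix.IsHermitian] at this ⊢
    rw [Matrix.conjTranspose_smul, this]
    simp
  · intro x
    rw [Matrix.smul_mulVec, dotProduct_smul]
    exact mul_nonneg ha (hX.dotProduct_mulVec_nonneg x)

lemma spectraplex_convex : Convex ℝ (spectraplex n) := by
  intro X hX Y hY a b ha hb hab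
  refine ⟨?_, ?_, ?_⟩
  · rw [Matrix.IsSymm, Matrix.transpose_add, Matrix.transpose_smul, Matrix.transpose_smul,
      hX.1, hY.1]
  · exact ((posSemidef_smul hX.2.1 ha).add (posSemidef_smul hY.2.1 hb))
  · rw [Matrix.trace_add, Matrix.trace_smul, Matrix.trace_smul, hX.2.2, hY.2.2]
    simpa using hab

end Topo


/-- **Spectral Maximin Theorem.** Given real symmetric matrices `A 1, …, A m`,
`max_{X ∈ Δₙ} min_{y ∈ Sₘ} ∑ yᵢ (Aᵢ • X) = min_{y ∈ Sₘ} max_{X ∈ Δₙ} ∑ yᵢ (Aᵢ • X)`,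
with all inner and outer extrema attained. -/
theorem spectral_maximin {n m : ℕ} (hn : 1 ≤ n) (hm : 1 ≤ m)
    (A : Fin m → Matrix (Fin n) (Fin n) ℝ) (hA : ∀ i, (A i).IsSymm) :
    (∀ X ∈ spectraplex n, ∃ l : ℝ,
      IsLeast {s : ℝ | ∃ y ∈ unitSimplex m, s = ∑ i, y i * (A i * X).trace} l) ∧
    (∀ y ∈ unitSimplex m, ∃ g : ℝ,
      IsGreatest {s : ℝ | ∃ X ∈ spectraplex n, s = ∑ i, y i * (A i * X).trace} g) ∧
    ∃ v : ℝ,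
      IsGreatest {r : ℝ | ∃ X ∈ spectraplex n,
        IsLeast {s : ℝ | ∃ y ∈ unitSimplex m, s = ∑ i, y i * (A i * X).trace} r} v ∧
      IsLeast {r : ℝ | ∃ y ∈ unitSimplex m,
        IsGreatest {s : ℝ | ∃ X ∈ spectraplex n, s = ∑ i, y i * (A i * X).trace} r} v := by
  classical
  -- swap lemma
  have hswap : ∀ (y : Fin m → ℝ) (X : Matrix (Fin n) (Fin n) ℝ),
      ∑ i, y i * (A i * X).trace = ((∑ i, y i • A i) * X).trace := by
    intro y X
    rw [Finset.sum_mul, Matrix.trace_sum]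
    exact (Finset.sum_congr rfl fun i _ => by
      rw [smul_mul_assoc, Matrix.trace_smul, smul_eq_mul]).symm
  have hBsymm : ∀ y : Fin m → ℝ, (∑ i, y i • A i).IsSymm := fun y => by
    rw [Matrix.IsSymm, Matrix.transpose_sum]
    exact Finset.sum_congr rfl fun i _ => by rw [Matrix.transpose_smul, hA i]
  -- part 2 as an explicit statement
  have part2 : ∀ y : Fin m → ℝ,
      IsGreatest {s : ℝ | ∃ X ∈ spectraplex n, s = ∑ i, y i * (A i * X).trace}
        (Finset.univ.sup' (univ_nonempty_fin hn)
          (isSymm_isHermitian (hBsymm y)).eigenvalues) := by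
    intro y
    have hset : {s : ℝ | ∃ X ∈ spectraplex n, s = ∑ i, y i * (A i * X).trace}
        = {s : ℝ | ∃ X ∈ spectraplex n, s = ((∑ i, y i • A i) * X).trace} := by
      ext s
      constructor
      · rintro ⟨X, hX, rfl⟩; exact ⟨X, hX, (hswap y X)⟩
      · rintro ⟨X, hX, rfl⟩; exact ⟨X, hX, (hswap y X).symm⟩
    rw [hset]
    exact spectraplex_isGreatest hn (hBsymm y)
  -- the concave objective Φ
  set Φ : Matrix (Fin n) (Fin n) ℝ → ℝ :=
    fun X => Finset.univ.inf' (univ_nonempty_fin hm) fun i => (A i * X).trace with hΦ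
  have hΦcont : Continuous Φ := by
    rw [continuous_iff_continuousAt]
    intro X
    exact ContinuousAt.finset_inf'_apply _ fun i _ => (continuous_traceMul (A i)).continuousAt
  obtain ⟨Xs, hXs, hmax⟩ :=
    spectraplex_isCompact.exists_isMaxOn (spectraplex_nonempty hn) hΦcont.continuousOn
  set v : ℝ := Φ Xs with hv
  have hmax' : ∀ X ∈ spectraplex n, Φ X ≤ v := fun X hX => hmax hX
  -- separation
  set φ : Matrix (Fin n) (Fin n) ℝ → (Fin m → ℝ) :=
    fun X => fun i => (A i * X).trace with hφ
  have hφlin : IsLinearMap ℝ φ := by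
    constructor
    · intro X Y; funext i; simp [hφ, Matrix.mul_add, Matrix.trace_add]
    · intro c X; funext i; simp [hφ, Matrix.mul_smul, Matrix.trace_smul]
  set K : Set (Fin m → ℝ) := φ '' spectraplex n with hK
  have hKconv : Convex ℝ K := spectraplex_convex.is_linear_image hφlin
  set O : Set (Fin m → ℝ) := {x | ∀ i, v < x i} with hO
  have hOopen : IsOpen O := by
    have : O = ⋂ i, {x : Fin m → ℝ | v < x i} := by ext x; simp [hO]
    rw [this]
    exact isOpen_iInter_of_finite fun i => isOpen_lt continuous_const (continuous_apply i)
  have hOconv : Convex ℝ O := by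
    have : O = ⋂ i, {x : Fin m → ℝ | v < x i} := by ext x; simp [hO]
    rw [this]
    exact convex_iInter fun i => convex_halfSpace_gt ⟨fun a b => rfl, fun c x => rfl⟩ v
  have hdisj : Disjoint O K := by
    rw [Set.disjoint_left]
    rintro x hxO ⟨X, hXΔ, rfl⟩
    have h1 : v < Φ X := (Finset.lt_inf'_iff _).mpr fun i _ => hxO i
    exact absurd (hmax' X hXΔ) (not_le.mpr h1)
  obtain ⟨f, u, hfO, hfK⟩ := geometric_hahn_banach_open hOconv hOopen hKconv hdisj
  set w : Fin m → ℝ := fun i => -(f fun j => if i = j then (1 : ℝ) else 0) with hw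
  have hfeval : ∀ x : Fin m → ℝ, f x = -∑ i, x i * w i := by
    intro x
    conv_lhs => rw [pi_eq_sum_univ x]
    rw [map_sum]
    rw [← Finset.sum_neg_distrib]
    apply Finset.sum_congr rfl
    intro i _
    rw [f.map_smul, smul_eq_mul, hw]
    ring
  have ggt : ∀ x ∈ O, -u < ∑ i, x i * w i := by
    intro x hx
    have := hfO x hx
    rw [hfeval x] at this
    linarith
  have gle : ∀ k ∈ K, ∑ i, k i * w i ≤ -u := by
    intro k hk
    have := hfK k hk
    rw [hfeval k] at this
    linarith
  have hconstO : ∀ ε : ℝ, 0 < ε → (fun _ : Fin m => v + ε) ∈ O := fun ε hε i => by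
    simpa using hε
  set S : ℝ := ∑ i, w i with hS
  have hwnonneg : ∀ i, 0 ≤ w i := by
    intro i
    by_contra hneg
    push_neg at hneg
    set T : ℝ := max 0 (((v + 1) * S + u) / (-w i)) with hT
    have hT0 : 0 ≤ T := le_max_left _ _
    have hT1 : ((v + 1) * S + u) / (-w i) ≤ T := le_max_right _ _
    set x : Fin m → ℝ := fun j => (v + 1) + (if j = i then T else 0) with hx
    have hxO : x ∈ O := by
      intro j
      simp only [hx]
      rcases eq_or_ne j i with rfl | hij
      · rw [if_pos rfl]; linarith
      · rw [if_neg hij]; linarith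
    have hsum : ∑ j, x j * w j = (v + 1) * S + T * w i := by
      have hterm : ∀ j, x j * w j = (v + 1) * w j + (if j = i then T * w j else 0) := by
        intro j
        simp only [hx]
        rcases eq_or_ne j i with rfl | hij
        · rw [if_pos rfl, if_pos rfl]; ring
        · rw [if_neg hij, if_neg hij]; ring
      rw [Finset.sum_congr rfl fun j _ => hterm j, Finset.sum_add_distrib, ← Finset.mul_sum,
        Finset.sum_ite_eq' Finset.univ i fun j => T * w j]
      simp [hS]
    have hTw : T * w i ≤ -((v + 1) * S + u) := by
      have h1 : T * w i ≤ (((v + 1) * S + u) / (-w i)) * w i :=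
        mul_le_mul_of_nonpos_right hT1 (le_of_lt hneg)
      have h2 : (((v + 1) * S + u) / (-w i)) * w i = -((v + 1) * S + u) := by
        rw [div_mul_eq_mul_div, mul_div_assoc, div_neg, div_self (ne_of_lt hneg)]
        ring
      exact h1.trans (le_of_eq h2)
    have := ggt x hxO
    rw [hsum] at this
    linarith
  have hSnonneg : 0 ≤ S := Finset.sum_nonneg fun i _ => hwnonneg i
  obtain ⟨X₀, hX₀⟩ := spectraplex_nonempty hn
  have hSpos : 0 < S := by
    rcases lt_or_eq_of_le hSnonneg with h | h
    · exact h
    · exfalso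
      have hwz : ∀ i, w i = 0 := by
        intro i
        have := (Finset.sum_eq_zero_iff_of_nonneg fun j _ => hwnonneg j).mp h.symm
        exact this i (Finset.mem_univ i)
      have h1 := ggt _ (hconstO 1 one_pos)
      have h2 := gle (φ X₀) ⟨X₀, hX₀, rfl⟩
      simp only [hwz, mul_zero, Finset.sum_const_zero] at h1 h2
      linarith
  have hneg_u_le : -u ≤ v * S := by
    by_contra hcon
    push_neg at hcon
    set ε : ℝ := (-u - v * S) / (2 * S) with hε
    have hεpos : 0 < ε := div_pos (by linarith) (by linarith)
    have := ggt _ (hconstO ε hεpos)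
    have hsum : ∑ i, (fun _ : Fin m => v + ε) i * w i = (v + ε) * S := by
      rw [hS, Finset.mul_sum]
    rw [hsum] at this
    have hεS : ε * S = (-u - v * S) / 2 := by
      rw [hε]; field_simp
    nlinarith
  set ys : Fin m → ℝ := fun i => w i / S with hys
  have hysS : ys ∈ unitSimplex m := by
    constructor
    · rw [hys, ← Finset.sum_div, ← hS, div_self (ne_of_gt hSpos)]
    · intro i; exact div_nonneg (hwnonneg i) (le_of_lt hSpos)
  have hysle : ∀ X ∈ spectraplex n, ∑ i, ys i * (A i * X).trace ≤ v := by
    intro X hX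
    have h1 : ∑ i, (A i * X).trace * w i ≤ -u := gle (φ X) ⟨X, hX, rfl⟩
    have h2 : ∑ i, ys i * (A i * X).trace = (∑ i, (A i * X).trace * w i) / S := by
      rw [Finset.sum_div]
      apply Finset.sum_congr rfl
      intro i _
      rw [hys]; ring
    rw [h2]
    rw [div_le_iff₀ hSpos]
    calc ∑ i, (A i * X).trace * w i ≤ -u := h1
      _ ≤ v * S := hneg_u_le
  -- weak duality bound
  have hweak : ∀ y ∈ unitSimplex m, ∀ X ∈ spectraplex n,
      Φ X ≤ ∑ i, y i * (A i * X).trace := fun y hy X _ =>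
    inf_le_simplex_sum hm (fun i => (A i * X).trace) hy
  refine ⟨fun X _ => ⟨_, simplex_isLeast hm _⟩, fun y _ => ⟨_, part2 y⟩, v, ?_, ?_⟩
  · -- IsGreatest for maximin
    constructor
    · exact ⟨Xs, hXs, simplex_isLeast hm _⟩
    · rintro r ⟨X, hXΔ, hr⟩
      have : r = Φ X := hr.unique (simplex_isLeast hm _)
      rw [this]
      exact hmax' X hXΔ
  · -- IsLeast for minimax
    constructor
    · refine ⟨ys, hysS, ?_⟩
      have hg := part2 ys
      have hgv : Finset.univ.sup' (univ_nonempty_fin hn)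
          (isSymm_isHermitian (hBsymm ys)).eigenvalues = v := by
        apply le_antisymm
        · obtain ⟨X, hX, hXeq⟩ := hg.1
          rw [hXeq]
          exact hysle X hX
        · calc v = Φ Xs := rfl
            _ ≤ ∑ i, ys i * (A i * Xs).trace := hweak ys hysS Xs hXs
            _ ≤ _ := hg.2 ⟨Xs, hXs, rfl⟩
      rw [← hgv]
      exact hg
    · rintro r ⟨y, hy, hr⟩
      calc v = Φ Xs := rfl
        _ ≤ ∑ i, y i * (A i * Xs).trace := hweak y hy Xs hXs
        _ ≤ r := hr.2 ⟨Xs, hXs, rfl⟩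
end
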